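/- Let P be a directed set such that P = ⋃_{n<ω} P_n where each P_n has relative calibre ω in P (every countable subset of P_n is bounded in P). Then P is productively calibre (ω₁,ω): for every directed set Q with calibre (ω₁,ω), the product P × Q with the coordinatewise order has calibre (ω₁,ω). -/
import Mathlib


open Cardinal Set

/-- A directed set has calibre `(ω₁,ω)` if every uncountable subset contains an
infinite subset which is bounded (has an upper bound). -/
def CalibreO1O (P : Type*) [Preorder P] : Prop :=
  ∀ S : Set P, ¬ S.Countable → ∃ T ⊆ S, T.Infinite ∧ BddAbove T

/-- Every infinite set has a countably infinite subset. -/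
lemma exists_countable_infinite_subset' {α : Type*} {s : Set α} (hs : s.Infinite) :
    ∃ t ⊆ s, t.Countable ∧ t.Infinite := by
  let f := Set.Infinite.natEmbedding s hs
  exact ⟨Set.range fun n => (f n : α), by rintro _ ⟨n, rfl⟩; exact (f n).2,
    Set.countable_range _,
    Set.infinite_range_of_injective (Subtype.val_injective.comp f.injective)⟩

/-- if `P = ⋃_n P_n` where every countable subset of each `P_n`
is bounded in `P`, then `P` is productively calibre `(ω₁,ω)`. -/
theorem sigma_relative_calibre_omega_productive {P : Type u} [PartialOrder P]
    (hPdir : ∀ F : Set P, F.Finite → BddAbove F)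
    (Pn : ℕ → Set P) (hcover : (⋃ k, Pn k) = Set.univ)
    (hrel : ∀ k, ∀ S ⊆ Pn k, S.Countable → BddAbove S) :
    ∀ (Q : Type v) [PartialOrder Q],
      (∀ F : Set Q, F.Finite → BddAbove F) →
      CalibreO1O Q → CalibreO1O (P × Q) := by
  intro Q _ hQdir hQ S hS
  set Sn : ℕ → Set (P × Q) := fun n => {s ∈ S | s.1 ∈ Pn n} with hSnDef
  have hScover : S = ⋃ n, Sn n := by
    ext s
    simp only [Set.mem_iUnion, hSnDef, Set.mem_setOf_eq]
    constructor
    · intro hs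
      have h1 : s.1 ∈ ⋃ k, Pn k := by rw [hcover]; trivial
      obtain ⟨n, hn⟩ := Set.mem_iUnion.1 h1
      exact ⟨n, hs, hn⟩
    · rintro ⟨n, hs, -⟩; exact hs
  obtain ⟨n, hn⟩ : ∃ n, ¬ (Sn n).Countable := by
    by_contra h
    push_neg at h
    exact hS (hScover ▸ Set.countable_iUnion h)
  have hSnS : Sn n ⊆ S := fun s hs => hs.1
  have hSnP : ∀ s ∈ Sn n, s.1 ∈ Pn n := fun s hs => hs.2
  by_cases himg : (Prod.snd '' Sn n).Countable
  · -- some fiber is uncountable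
    obtain ⟨q, hq, hfib⟩ : ∃ q ∈ Prod.snd '' Sn n, ¬ {s ∈ Sn n | s.2 = q}.Countable := by
      by_contra h
      push_neg at h
      apply hn
      have hsub : Sn n ⊆ ⋃ q ∈ Prod.snd '' Sn n, {s ∈ Sn n | s.2 = q} :=
        fun s hs => Set.mem_biUnion ⟨s, hs, rfl⟩ ⟨hs, rfl⟩
      exact ((himg.biUnion h).mono hsub)
    have hinf : {s ∈ Sn n | s.2 = q}.Infinite := fun hfin => hfib hfin.countable
    obtain ⟨T, hTsub, hTc, hTinf⟩ := exists_countable_infinite_subset' hinf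
    refine ⟨T, fun s hs => hSnS (hTsub hs).1, hTinf, ?_⟩
    obtain ⟨bP, hbP⟩ := hrel n (Prod.fst '' T)
      (by rintro p ⟨s, hs, rfl⟩; exact hSnP s (hTsub hs).1) (hTc.image _)
    exact ⟨(bP, q), fun s hs => ⟨hbP ⟨s, hs, rfl⟩, le_of_eq (hTsub hs).2⟩⟩
  · obtain ⟨T, hTsub, hTinf, bQ, hbQ⟩ := hQ _ himg
    obtain ⟨T0, hT0sub, hT0c, hT0inf⟩ := exists_countable_infinite_subset' hTinf
    have hs₀ : (Sn n).Nonempty := (Set.Infinite.nonempty (fun h => hn h.countable))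
    obtain ⟨s₀, hs₀⟩ := hs₀
    have hpre : ∀ q ∈ T0, ∃ s, s ∈ Sn n ∧ s.2 = q := fun q hq => by
      obtain ⟨s, hs, hsq⟩ := hTsub (hT0sub hq); exact ⟨s, hs, hsq⟩
    classical
    set g : Q → P × Q := fun q => if h : q ∈ T0 then (hpre q h).choose else s₀ with hgDef
    have hg1 : ∀ q ∈ T0, g q ∈ Sn n := fun q hq => by
      simp only [hgDef, dif_pos hq]; exact (hpre q hq).choose_spec.1
    have hg2 : ∀ q ∈ T0, (g q).2 = q := fun q hq => by
      simp only [hgDef, dif_pos hq]; exact (hpre q hq).choose_spec.2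
    have hginj : Set.InjOn g T0 := fun a ha b hb hab => by
      rw [← hg2 a ha, ← hg2 b hb, hab]
    refine ⟨g '' T0, ?_, Set.Infinite.image hginj hT0inf, ?_⟩
    · rintro s ⟨q, hq, rfl⟩; exact hSnS (hg1 q hq)
    · obtain ⟨bP, hbP⟩ := hrel n (Prod.fst '' (g '' T0))
        (by rintro p ⟨s, ⟨q, hq, rfl⟩, rfl⟩; exact hSnP _ (hg1 q hq))
        ((hT0c.image g).image _)
      refine ⟨(bP, bQ), ?_⟩
      rintro s ⟨q, hq, rfl⟩
      exact ⟨hbP ⟨g q, ⟨q, hq, rfl⟩, rfl⟩, by rw [hg2 q hq]; exact hbQ (hT0sub hq)⟩
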